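/- Let ℓ be a prime, k an algebraically closed field of characteristic ℓ, and W = W(k) the ring of ℓ-typical Witt vectors of k. Let A be a commutative W-algebra that is finitely generated as a W-module, reduced, and ℓ-torsion-free (multiplication by ℓ is injective on A). Then every injective W-algebra homomorphism f : A → A is surjective, hence an isomorphism. -/

import Mathlib

/-- In a reduced Noetherian commutative ring, a monic polynomial has finitely many roots. -/
lemma finite_roots_of_monic' {A : Type} [CommRing A] [IsNoetherianRing A] [IsReduced A]
    {p : Polynomial A} (hp : p.Monic) : {x : A | p.IsRoot x}.Finite := by
  haveI : Finite ↥(minimalPrimes A) := (minimalPrimes.finite_of_isNoetherianRing A).to_subtype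
  have hinj : ∀ x : A, (∀ q ∈ minimalPrimes A, x ∈ q) → x = 0 := by
    intro x hx
    refine IsReduced.eq_zero x (nilpotent_iff_mem_prime.2 fun J hJ => ?_)
    obtain ⟨q, hq, hqJ⟩ := Ideal.exists_minimalPrimes_le (I := ⊥) (J := J) bot_le
    exact hqJ (hx q hq)
  have hfin : ∀ q : minimalPrimes A,
      {y : A ⧸ q.1 | (p.map (Ideal.Quotient.mk q.1)).IsRoot y}.Finite := by
    intro q
    haveI : q.1.IsPrime := q.2.1.1
    exact Polynomial.finite_setOf_isRoot ((hp.map _).ne_zero)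
  haveI : ∀ q : minimalPrimes A,
      Finite ↥{y : A ⧸ q.1 | (p.map (Ideal.Quotient.mk q.1)).IsRoot y} :=
    fun q => (hfin q).to_subtype
  have : Finite ↥{x : A | p.IsRoot x} := by
    let F : ↥{x : A | p.IsRoot x} →
        Π q : minimalPrimes A, ↥{y : A ⧸ q.1 | (p.map (Ideal.Quotient.mk q.1)).IsRoot y} :=
      fun x q => ⟨Ideal.Quotient.mk q.1 x.1, by
        have hx := x.2
        simp only [Set.mem_setOf_eq, Polynomial.IsRoot] at hx ⊢
        rw [Polynomial.eval_map, Polynomial.eval₂_at_apply, hx, map_zero]⟩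
    refine Finite.of_injective F ?_
    intro x y hxy
    have hsub : ∀ q ∈ minimalPrimes A, (x.1 - y.1) ∈ q := by
      intro q hq
      have := congrFun hxy ⟨q, hq⟩
      simp only [F, Subtype.mk.injEq] at this
      rwa [← sub_eq_zero, ← map_sub, Ideal.Quotient.eq_zero_iff_mem] at this
    exact Subtype.ext (sub_eq_zero.mp (hinj _ hsub))
  exact Set.toFinite _

/-- Let `k` be an algebraically closed field of prime characteristic `ℓ` and
`W = W(k)` its ring of `ℓ`-typical Witt vectors.  If `A` is a commutative `W`-algebra that
is finitely generated as a `W`-module, reduced, and `ℓ`-torsion-free, then every injective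
`W`-algebra endomorphism of `A` is surjective (hence an isomorphism). -/
theorem statement_4 (l : ℕ) [Fact l.Prime]
    (k : Type) [Field k] [IsAlgClosed k] [CharP k l]
    (A : Type) [CommRing A] [Algebra (WittVector l k) A]
    [Module.Finite (WittVector l k) A] [IsReduced A]
    (htf : Function.Injective (fun a : A => (l : A) * a))
    (f : A →ₐ[WittVector l k] A) (hf : Function.Injective f) :
    Function.Surjective f := by
  -- `W(k)` is a Noetherian ring (it is a DVR).
  haveI : IsDiscreteValuationRing (WittVector l k) := WittVector.isDiscreteValuationRing
  haveI : IsNoetherianRing (WittVector l k) := inferInstance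
  haveI : IsNoetherian (WittVector l k) A :=
    isNoetherian_of_isNoetherianRing_of_finite (WittVector l k) A
  haveI : IsNoetherianRing A :=
    isNoetherianRing_iff.2 (isNoetherian_of_tower (WittVector l k) inferInstance)
  haveI : Algebra.IsIntegral (WittVector l k) A := Algebra.IsIntegral.of_finite _ _
  -- a finite generating set of `A` as a `W(k)`-module
  obtain ⟨s, hs⟩ := Module.Finite.fg_top (R := WittVector l k) (M := A)
  -- choose, for each `x : A`, a monic polynomial over `W(k)` annihilating it
  have hInt : ∀ x : A, ∃ p : Polynomial (WittVector l k),
      p.Monic ∧ Polynomial.aeval x p = 0 := by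
    intro x
    obtain ⟨p, hp1, hp2⟩ := Algebra.IsIntegral.isIntegral (R := WittVector l k) x
    exact ⟨p, hp1, hp2⟩
  choose P hPmonic hPzero using hInt
  -- the root set of each `P x` in `A` is finite
  have hRfin : ∀ x : A, Finite ↥{y : A | Polynomial.aeval y (P x) = 0} := by
    intro x
    have hset : {y : A | Polynomial.aeval y (P x) = 0}
        = {y : A | ((P x).map (algebraMap (WittVector l k) A)).IsRoot y} := by
      ext y
      simp [Polynomial.IsRoot, Polynomial.aeval_def, Polynomial.eval_map]
    rw [hset]
    exact (finite_roots_of_monic' ((hPmonic x).map _)).to_subtype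
  haveI := hRfin
  -- every iterate of `f` sends `x` to a root of `P x`
  have hroot : ∀ (n : ℕ) (x : A), Polynomial.aeval ((⇑f)^[n] x) (P x) = 0 := by
    intro n x
    induction n with
    | zero => simpa using hPzero x
    | succ n ih =>
        rw [Function.iterate_succ_apply', Polynomial.aeval_algHom_apply, ih, map_zero]
  -- pigeonhole: two distinct iterates agree on the generating set
  let Φ : ℕ → Π x : {a : A // a ∈ s}, {y : A // y ∈ {y : A | Polynomial.aeval y (P x.1) = 0}} :=
    fun n x => ⟨(⇑f)^[n] x.1, hroot n x.1⟩
  obtain ⟨m, n, hmn, hΦ⟩ := Finite.exists_ne_map_eq_of_infinite Φ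
  -- WLOG `m < n`
  wlog hlt : m < n generalizing m n
  · exact this n m (Ne.symm hmn) hΦ.symm (by omega)
  -- the iterates `f^[m]` and `f^[n]` agree on all of `A`
  have hLM : (f.toLinearMap ^ m) = (f.toLinearMap ^ n) := by
    refine LinearMap.ext_on hs fun x hx => ?_
    have := congrArg Subtype.val (congrFun hΦ ⟨x, hx⟩)
    simpa [Φ, Module.End.pow_apply] using this
  have heq : ∀ x : A, (⇑f)^[m] x = (⇑f)^[n] x := by
    intro x
    have := congrArg (fun g : A →ₗ[WittVector l k] A => g x) hLM
    simpa [Module.End.pow_apply] using this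
  -- conclude surjectivity
  intro a
  have hmi : Function.Injective ((⇑f)^[m]) := Function.Injective.iterate hf m
  have hfix : (⇑f)^[n - m] a = a := by
    apply hmi
    have : (⇑f)^[m + (n - m)] a = (⇑f)^[m] ((⇑f)^[n - m] a) :=
      Function.iterate_add_apply _ _ _ _
    rw [Nat.add_sub_cancel' hlt.le] at this
    rw [← this, ← heq a]
  refine ⟨(⇑f)^[n - m - 1] a, ?_⟩
  have h1 : n - m - 1 + 1 = n - m := by omega
  calc f ((⇑f)^[n - m - 1] a) = (⇑f)^[n - m - 1 + 1] a := (Function.iterate_succ_apply' _ _ _).symm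
    _ = a := by rw [h1]; exact hfix
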